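/- arXiv:math/0701606 — 3 statements merged into one kernel-verified Lean document; each statement's English description precedes it below -/
import Mathlib

section
/- Under the hypotheses of the asymptotic integration lemma (Y' = A(t)Y, Y(0)=I, ∫_0^∞‖A‖ dt < ∞, L = lim_{t→∞} Y(t)), the error satisfies the quantitative bound ‖Y(t) - L‖ ≤ C ∫_t^∞ ‖A(s)‖ ds for all t ≥ 0, where C = exp(∫_0^∞ ‖A(s)‖ ds). -/
open MeasureTheory Filter

/-- Quantitative error bound in the asymptotic integration lemma: with
`Y' = A(t)Y`, `Y(0) = I`, `∫_0^∞ ‖A‖ dt < ∞` and `L = lim_{t→∞} Y(t)`, one has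
`‖Y(t) - L‖ ≤ C ∫_t^∞ ‖A(s)‖ ds` for all `t ≥ 0`, where `C = exp(∫_0^∞ ‖A(s)‖ ds)`. -/
theorem asymptotic_integration_error_bound (m : ℕ)
    (A Y : ℝ → (EuclideanSpace ℂ (Fin m) →L[ℂ] EuclideanSpace ℂ (Fin m)))
    (hAcont : ContinuousOn A (Set.Ici 0))
    (hAint : IntegrableOn (fun t => ‖A t‖) (Set.Ici (0:ℝ)))
    (hY : ∀ t ∈ Set.Ici (0:ℝ), HasDerivAt Y (A t ∘L Y t) t)
    (hY0 : Y 0 = ContinuousLinearMap.id ℂ (EuclideanSpace ℂ (Fin m)))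
    (L : EuclideanSpace ℂ (Fin m) →L[ℂ] EuclideanSpace ℂ (Fin m))
    (hL : Tendsto Y atTop (nhds L)) :
    ∀ t ≥ (0:ℝ), ‖Y t - L‖ ≤
      Real.exp (∫ s in Set.Ici (0:ℝ), ‖A s‖) * ∫ s in Set.Ici t, ‖A s‖ := by
  set I₀ : ℝ := ∫ s in Set.Ici (0:ℝ), ‖A s‖ with hI₀
  set C : ℝ := Real.exp I₀ with hC
  have hCpos : 0 < C := Real.exp_pos _
  have hnA : ContinuousOn (fun s => ‖A s‖) (Set.Ici (0:ℝ)) := hAcont.norm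
  -- interval integrability of ‖A‖ on subintervals of [0, ∞)
  have hint : ∀ {a b : ℝ}, 0 ≤ a → a ≤ b →
      IntervalIntegrable (fun s => ‖A s‖) volume a b := by
    intro a b ha hab
    exact (hAint.mono_set (by
      rw [Set.uIcc_of_le hab]
      exact fun x hx => le_trans ha hx.1)).intervalIntegrable
  -- the primitive of ‖A‖
  set g : ℝ → ℝ := fun t => ∫ s in (0:ℝ)..t, ‖A s‖ with hg
  -- interval integrals of ‖A‖ over [a,b] ⊆ [a,∞) are at most the tail integral
  have htail : ∀ {a b : ℝ}, 0 ≤ a → a ≤ b →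
      (∫ s in a..b, ‖A s‖) ≤ ∫ s in Set.Ici a, ‖A s‖ := by
    intro a b ha hab
    rw [intervalIntegral.integral_of_le hab]
    refine setIntegral_mono_set (hAint.mono_set (Set.Ici_subset_Ici.2 ha))
      (Eventually.of_forall fun s => norm_nonneg _) ?_
    exact HasSubset.Subset.eventuallyLE (Set.Ioc_subset_Icc_self.trans Set.Icc_subset_Ici_self)
  have hg_le : ∀ {t : ℝ}, 0 ≤ t → g t ≤ I₀ := fun {t} ht => htail le_rfl ht
  -- continuity of Y on [0,∞)
  have hYcont : ContinuousOn Y (Set.Ici (0:ℝ)) :=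
    fun s hs => ((hY s hs).continuousAt).continuousWithinAt
  -- Gronwall: ‖Y t‖ ≤ exp (g t) ≤ C for t ≥ 0
  have hYbound : ∀ t ≥ (0:ℝ), ‖Y t‖ ≤ C := by
    intro b hb
    have key : ∀ η > (0:ℝ), ‖Y b‖ ≤ Real.exp (g b + η * b) := by
      intro η hη
      have main : ∀ ⦃x : ℝ⦄, x ∈ Set.Icc 0 b → ‖Y x‖ ≤ Real.exp (g x + η * x) := by
        refine image_norm_le_of_norm_deriv_right_lt_deriv_boundary' (f := Y)
          (f' := fun x => A x ∘L Y x) (B := fun x => Real.exp (g x + η * x))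
          (B' := fun x => (‖A x‖ + η) * Real.exp (g x + η * x)) ?_ ?_ ?_ ?_ ?_ ?_
        · exact hYcont.mono (Set.Icc_subset_Ici_self)
        · exact fun x hx => (hY x hx.1).hasDerivWithinAt
        · rw [hY0]
          show ‖ContinuousLinearMap.id ℂ _‖ ≤ Real.exp (g 0 + η * 0)
          have h1 : g 0 + η * 0 = 0 := by
            show (∫ s in (0:ℝ)..(0:ℝ), ‖A s‖) + η * 0 = 0
            rw [intervalIntegral.integral_same]; ring
          rw [h1, Real.exp_zero]
          exact ContinuousLinearMap.norm_id_le
        · -- continuity of B on Icc 0 b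
          apply Real.continuous_exp.comp_continuousOn
          apply ContinuousOn.add
          · have : ContinuousOn (fun x => ∫ s in Set.Ioc (0:ℝ) x, ‖A s‖) (Set.Icc 0 b) :=
              intervalIntegral.continuousOn_primitive (μ := volume)
                (hAint.mono_set (fun x hx => hx.1))
            refine this.congr fun x hx => ?_
            show (∫ s in (0:ℝ)..x, ‖A s‖) = ∫ s in Set.Ioc (0:ℝ) x, ‖A s‖
            rw [intervalIntegral.integral_of_le hx.1]
          · exact (continuous_const.mul continuous_id).continuousOn
        · -- derivative of B
          intro x hx
          have hgderiv : HasDerivWithinAt g (‖A x‖) (Set.Ici x) x := by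
            apply intervalIntegral.integral_hasDerivWithinAt_right
              (hint le_rfl hx.1) (t := Set.Ioi x)
            · exact (hnA.mono (fun y hy => le_trans hx.1 hy.le)).stronglyMeasurableAtFilter_nhdsWithin
                measurableSet_Ioi x
            · exact (hnA x hx.1).mono (fun y hy => le_trans hx.1 hy.le)
          have h2 := hgderiv.add (((hasDerivAt_id x).const_mul η).hasDerivWithinAt)
          rw [mul_one] at h2
          have h3 := h2.exp
          rw [mul_comm] at h3
          exact h3
        · -- strict bound at contact points
          intro x hx hfB
          calc ‖A x ∘L Y x‖ ≤ ‖A x‖ * ‖Y x‖ := ContinuousLinearMap.opNorm_comp_le _ _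
            _ = ‖A x‖ * Real.exp (g x + η * x) := by rw [hfB]
            _ < (‖A x‖ + η) * Real.exp (g x + η * x) := by
                apply mul_lt_mul_of_pos_right _ (Real.exp_pos _)
                linarith
      exact main ⟨hb, le_rfl⟩
    have hlim : Tendsto (fun η : ℝ => Real.exp (g b + η * b)) (nhdsWithin 0 (Set.Ioi 0))
        (nhds (Real.exp (g b))) := by
      have : ContinuousAt (fun η : ℝ => Real.exp (g b + η * b)) 0 := by fun_prop
      have h0 : Real.exp (g b + (0:ℝ) * b) = Real.exp (g b) := by norm_num
      exact h0 ▸ (this.continuousWithinAt.tendsto)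
    have : ‖Y b‖ ≤ Real.exp (g b) :=
      ge_of_tendsto hlim (eventually_nhdsWithin_of_forall fun η hη => key η hη)
    exact this.trans (Real.exp_le_exp.2 (hg_le hb))
  -- main estimate
  intro t ht
  have hYAcont : ContinuousOn (fun s => A s ∘L Y s) (Set.Ici (0:ℝ)) :=
    hAcont.clm_comp hYcont
  have key : ∀ u ≥ t, ‖Y u - Y t‖ ≤ C * ∫ s in Set.Ici t, ‖A s‖ := by
    intro u hu
    have htu : Set.uIcc t u ⊆ Set.Ici (0:ℝ) := by
      rw [Set.uIcc_of_le hu]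
      exact fun x hx => le_trans ht hx.1
    have hFTC : (∫ s in t..u, A s ∘L Y s) = Y u - Y t := by
      apply intervalIntegral.integral_eq_sub_of_hasDerivAt
      · exact fun x hx => hY x (htu hx)
      · exact (hYAcont.mono htu).intervalIntegrable
    calc ‖Y u - Y t‖ = ‖∫ s in t..u, A s ∘L Y s‖ := by rw [hFTC]
      _ ≤ ∫ s in t..u, ‖A s ∘L Y s‖ := intervalIntegral.norm_integral_le_integral_norm hu
      _ ≤ ∫ s in t..u, C * ‖A s‖ := by
          apply intervalIntegral.integral_mono_on hu
          · exact ((hYAcont.norm).mono htu).intervalIntegrable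
          · exact (hint ht hu).const_mul C
          · intro x hx
            calc ‖A x ∘L Y x‖ ≤ ‖A x‖ * ‖Y x‖ := ContinuousLinearMap.opNorm_comp_le _ _
              _ ≤ ‖A x‖ * C := by
                  exact mul_le_mul_of_nonneg_left (hYbound x (le_trans ht hx.1)) (norm_nonneg _)
              _ = C * ‖A x‖ := mul_comm _ _
      _ = C * ∫ s in t..u, ‖A s‖ := intervalIntegral.integral_const_mul _ _
      _ ≤ C * ∫ s in Set.Ici t, ‖A s‖ := by
          exact mul_le_mul_of_nonneg_left (htail ht hu) hCpos.le
  have hlim2 : Tendsto (fun u => ‖Y u - Y t‖) atTop (nhds ‖L - Y t‖) :=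
    ((hL.sub tendsto_const_nhds).norm)
  have : ‖L - Y t‖ ≤ C * ∫ s in Set.Ici t, ‖A s‖ :=
    le_of_tendsto hlim2 ((eventually_ge_atTop t).mono key)
  rwa [norm_sub_rev] at this
end

section
/- Gronwall-type derivative bound: let A : [0,∞) → M_m(ℂ) be C¹ in a parameter ε with ‖A(t)‖ ≤ Ψ(t) and ‖∂_ε A(t)‖ ≤ (1+t)Ψ(t) for an integrable Ψ, and let Y(t,ε) solve ∂_t Y = A(t,ε)Y, Y(0,ε) = I. Then ‖∂_ε Y(t,ε)‖ ≤ C exp(∫_0^t (1+s)Ψ(s) ds) for all t ≥ 0, with C depending only on ∫_0^∞ Ψ. -/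
open MeasureTheory

set_option maxHeartbeats 2000000
set_option synthInstance.maxHeartbeats 400000

/-- Gronwall-type bound on the parameter derivative of a fundamental solution:
if `∂_t Y(t,ε) = A(t,ε) Y(t,ε)`, `Y(0,ε) = I`, with `‖A(t,ε)‖ ≤ Ψ(t)`,
`‖∂_ε A(t,ε)‖ ≤ (1+t)Ψ(t)` for an integrable `Ψ ≥ 0`, then the parameter derivative
`Z = ∂_ε Y` satisfies `‖Z(t,ε)‖ ≤ C exp(∫_0^t (1+s)Ψ(s) ds)` for all `t ≥ 0`, with `C`
depending only on `∫_0^∞ Ψ`. -/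
theorem parameter_derivative_gronwall_bound (m : ℕ)
    (Ψ : ℝ → ℝ) (hΨpos : ∀ t, 0 ≤ Ψ t)
    (hΨint : IntegrableOn Ψ (Set.Ici (0:ℝ)))
    (hΨcont : ContinuousOn Ψ (Set.Ici 0)) :
    ∃ C > (0:ℝ),
      ∀ (A A' Y Z : ℝ → ℝ → (EuclideanSpace ℂ (Fin m) →L[ℂ] EuclideanSpace ℂ (Fin m))),
        (∀ t ∈ Set.Ici (0:ℝ), ∀ ε : ℝ, HasDerivAt (fun s => Y s ε) (A t ε ∘L Y t ε) t) →
        (∀ ε : ℝ, Y 0 ε = ContinuousLinearMap.id ℂ (EuclideanSpace ℂ (Fin m))) →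
        (∀ t ∈ Set.Ici (0:ℝ), ∀ ε : ℝ, HasDerivAt (fun e => A t e) (A' t ε) ε) →
        (∀ t ∈ Set.Ici (0:ℝ), ∀ ε : ℝ, HasDerivAt (fun e => Y t e) (Z t ε) ε) →
        (∀ t ∈ Set.Ici (0:ℝ), ∀ ε : ℝ, ‖A t ε‖ ≤ Ψ t) →
        (∀ t ∈ Set.Ici (0:ℝ), ∀ ε : ℝ, ‖A' t ε‖ ≤ (1 + t) * Ψ t) →
        ∀ t ≥ (0:ℝ), ∀ ε : ℝ,
          ‖Z t ε‖ ≤ C * Real.exp (∫ s in Set.Icc 0 t, (1 + s) * Ψ s) := by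
  classical
  set I : ℝ := ∫ s in Set.Ici (0:ℝ), Ψ s with hIdef
  have hI0 : 0 ≤ I := setIntegral_nonneg measurableSet_Ici fun x _ => hΨpos x
  set M : ℝ := Real.exp I with hMdef
  have hM1 : 1 ≤ M := Real.one_le_exp hI0
  refine ⟨M + 1, by linarith, ?_⟩
  intro A A' Y Z hYd hY0 hA'd hZd hAb hA'b t ht ε
  -- continuous extension of Ψ to all of ℝ
  set Ψt : ℝ → ℝ := fun s => Ψ (max s 0) with hΨtdef
  have hΨtc : Continuous Ψt :=
    hΨcont.comp_continuous (continuous_id.max continuous_const) fun x => le_max_right x 0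
  have hΨtpos : ∀ s, 0 ≤ Ψt s := fun s => hΨpos _
  have hΨteq : ∀ s, 0 ≤ s → Ψt s = Ψ s := fun s hs => by
    show Ψ (max s 0) = Ψ s
    rw [max_eq_left hs]
  set g2 : ℝ → ℝ := fun s => (1 + s) * Ψt s with hg2def
  have hg2c : Continuous g2 := (continuous_const.add continuous_id).mul hΨtc
  set φ : ℝ → ℝ := fun u => ∫ s in (0:ℝ)..u, g2 s with hφdef
  have hφd : ∀ x, HasDerivAt φ (g2 x) x := fun x =>
    (hg2c.integral_hasStrictDerivAt 0 x).hasDerivAt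
  have hφ0 : ∀ u, 0 ≤ u → 0 ≤ φ u := fun u hu =>
    intervalIntegral.integral_nonneg hu fun s hs =>
      mul_nonneg (by linarith [hs.1]) (hΨtpos s)
  have hφzero : φ 0 = 0 := intervalIntegral.integral_same
  set φΨ : ℝ → ℝ := fun u => ∫ s in (0:ℝ)..u, Ψt s with hφΨdef
  have hφΨd : ∀ x, HasDerivAt φΨ (Ψt x) x := fun x =>
    (hΨtc.integral_hasStrictDerivAt 0 x).hasDerivAt
  have hφΨzero : φΨ 0 = 0 := intervalIntegral.integral_same
  have hφΨle : ∀ u, 0 ≤ u → φΨ u ≤ I := by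
    intro u hu
    have h1 : φΨ u = ∫ s in Set.Ioc (0:ℝ) u, Ψ s := by
      show (∫ s in (0:ℝ)..u, Ψt s) = _
      rw [intervalIntegral.integral_of_le hu]
      exact setIntegral_congr_fun measurableSet_Ioc fun s hs => hΨteq s hs.1.le
    rw [h1, hIdef]
    exact setIntegral_mono_set hΨint (Filter.Eventually.of_forall fun x => hΨpos x)
      (HasSubset.Subset.eventuallyLE fun s hs => hs.1.le)
  -- Gronwall bound on ‖Y‖
  have hYb : ∀ u, 0 ≤ u → ∀ e : ℝ, ‖Y u e‖ ≤ M := by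
    intro u hu e
    have key : ∀ δ : ℝ, 0 < δ → ‖Y u e‖ ≤ (1 + δ) * Real.exp (φΨ u + δ * u) := by
      intro δ hδ
      have hB : ∀ x, HasDerivAt (fun x => (1 + δ) * Real.exp (φΨ x + δ * x))
          ((1 + δ) * (Real.exp (φΨ x + δ * x) * (Ψt x + δ * 1))) x := fun x =>
        (((hφΨd x).add ((hasDerivAt_id x).const_mul δ)).exp).const_mul (1 + δ)
      have := image_norm_le_of_norm_deriv_right_lt_deriv_boundary
        (f := fun s => Y s e) (f' := fun s => A s e ∘L Y s e) (a := 0) (b := u)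
        (B := fun x => (1 + δ) * Real.exp (φΨ x + δ * x))
        (B' := fun x => (1 + δ) * (Real.exp (φΨ x + δ * x) * (Ψt x + δ * 1)))
        (fun x hx => ((hYd x hx.1 e).continuousAt).continuousWithinAt)
        (fun x hx => (hYd x hx.1 e).hasDerivWithinAt)
        (by
          show ‖Y 0 e‖ ≤ (1 + δ) * Real.exp (φΨ 0 + δ * 0)
          rw [hY0 e, hφΨzero]
          have h1 : ‖(ContinuousLinearMap.id ℂ (EuclideanSpace ℂ (Fin m)))‖ ≤ 1 :=
            ContinuousLinearMap.norm_id_le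
          rw [mul_zero, add_zero, Real.exp_zero, mul_one]
          linarith)
        hB
        (by
          intro x hx hEq
          beta_reduce at hEq ⊢
          have hxI : x ∈ Set.Ici (0:ℝ) := hx.1
          have h1 : ‖A x e ∘L Y x e‖ ≤ ‖A x e‖ * ‖Y x e‖ :=
            ContinuousLinearMap.opNorm_comp_le _ _
          have h2 : ‖A x e‖ ≤ Ψt x := by rw [hΨteq x hx.1]; exact hAb x hxI e
          have hE : 0 < Real.exp (φΨ x + δ * x) := Real.exp_pos _
          have h3 : ‖A x e ∘L Y x e‖ ≤ Ψt x * ((1 + δ) * Real.exp (φΨ x + δ * x)) := by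
            rw [← hEq]
            exact h1.trans (mul_le_mul_of_nonneg_right h2 (norm_nonneg _))
          refine lt_of_le_of_lt h3 ?_
          nlinarith [hΨtpos x, hE, mul_pos (mul_pos (by linarith : (0:ℝ) < 1 + δ) hE) hδ])
        (Set.right_mem_Icc.2 hu)
      exact this
    have hc : Continuous fun δ : ℝ => (1 + δ) * Real.exp (φΨ u + δ * u) :=
      (continuous_const.add continuous_id).mul
        (Real.continuous_exp.comp (continuous_const.add (continuous_id.mul continuous_const)))
    have htend : Filter.Tendsto (fun δ : ℝ => (1 + δ) * Real.exp (φΨ u + δ * u))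
        (nhdsWithin 0 (Set.Ioi 0)) (nhds ((1 + 0) * Real.exp (φΨ u + 0 * u))) :=
      (hc.tendsto 0).mono_left nhdsWithin_le_nhds
    have hle : ‖Y u e‖ ≤ (1 + 0) * Real.exp (φΨ u + 0 * u) := by
      refine ge_of_tendsto htend ?_
      filter_upwards [self_mem_nhdsWithin] with δ hδ
      exact key δ hδ
    have h4 : ‖Y u e‖ ≤ Real.exp (φΨ u) := by
      norm_num at hle; exact hle
    exact h4.trans (Real.exp_le_exp.2 (hφΨle u hu))
  -- mean value bound for A in ε
  have hMVT : ∀ x, x ∈ Set.Ici (0:ℝ) → ∀ e1 e2 : ℝ,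
      ‖A x e1 - A x e2‖ ≤ ((1 + x) * Ψ x) * ‖e1 - e2‖ := by
    intro x hx e1 e2
    exact Convex.norm_image_sub_le_of_norm_hasDerivWithin_le
      (fun e _ => (hA'd x hx e).hasDerivWithinAt)
      (fun e _ => hA'b x hx e) convex_univ (Set.mem_univ e2) (Set.mem_univ e1)
  -- bound for difference quotients
  have hD : ∀ h : ℝ, h ≠ 0 → ‖h⁻¹ • (Y t (ε + h) - Y t ε)‖ ≤ M * Real.exp (φ t) - M := by
    intro h hh
    have key : ∀ δ : ℝ, 0 < δ →
        ‖h⁻¹ • (Y t (ε + h) - Y t ε)‖ ≤ (M + δ) * Real.exp (φ t + δ * t) - M := by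
      intro δ hδ
      have hB : ∀ x, HasDerivAt (fun x => (M + δ) * Real.exp (φ x + δ * x) - M)
          ((M + δ) * (Real.exp (φ x + δ * x) * (g2 x + δ * 1))) x := fun x =>
        ((((hφd x).add ((hasDerivAt_id x).const_mul δ)).exp).const_mul (M + δ)).sub_const M
      have := image_norm_le_of_norm_deriv_right_lt_deriv_boundary
        (f := fun s => h⁻¹ • (Y s (ε + h) - Y s ε))
        (f' := fun s => h⁻¹ • ((A s (ε + h) ∘L Y s (ε + h)) - (A s ε ∘L Y s ε)))
        (a := 0) (b := t)
        (B := fun x => (M + δ) * Real.exp (φ x + δ * x) - M)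
        (B' := fun x => (M + δ) * (Real.exp (φ x + δ * x) * (g2 x + δ * 1)))
        (fun x hx => ((((hYd x hx.1 (ε + h)).sub (hYd x hx.1 ε)).const_smul
            h⁻¹).continuousAt).continuousWithinAt)
        (fun x hx => (((hYd x hx.1 (ε + h)).sub (hYd x hx.1 ε)).const_smul
            h⁻¹).hasDerivWithinAt)
        (by
          show ‖h⁻¹ • (Y 0 (ε + h) - Y 0 ε)‖ ≤ (M + δ) * Real.exp (φ 0 + δ * 0) - M
          rw [hY0, hY0, hφzero, sub_self]
          have hz : ‖h⁻¹ • (0 : EuclideanSpace ℂ (Fin m) →L[ℂ] EuclideanSpace ℂ (Fin m))‖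
              = 0 := by
            have : h⁻¹ • (0 : EuclideanSpace ℂ (Fin m) →L[ℂ] EuclideanSpace ℂ (Fin m)) = 0 := by
              ext v i
              simp
            rw [this, norm_zero]
          rw [hz, mul_zero, add_zero, Real.exp_zero, mul_one]
          linarith)
        hB
        (by
          intro x hx hEq
          beta_reduce at hEq ⊢
          have hxI : x ∈ Set.Ici (0:ℝ) := hx.1
          set E : ℝ := Real.exp (φ x + δ * x) with hEdef
          set Bx : ℝ := (M + δ) * E - M with hBx
          have hdec : h⁻¹ • ((A x (ε + h) ∘L Y x (ε + h)) - (A x ε ∘L Y x ε))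
              = (A x (ε + h)) ∘L (h⁻¹ • (Y x (ε + h) - Y x ε))
                + h⁻¹ • ((A x (ε + h) - A x ε) ∘L (Y x ε)) := by
            ext v i
            simp only [ContinuousLinearMap.smul_apply, ContinuousLinearMap.sub_apply,
              ContinuousLinearMap.comp_apply, ContinuousLinearMap.add_apply,
              map_sub, ContinuousLinearMap.map_smul_of_tower, smul_sub,
              PiLp.smul_apply, PiLp.sub_apply, PiLp.add_apply, Complex.real_smul]
            ring
          rw [hdec]
          have hn1 : ‖(A x (ε + h)) ∘L (h⁻¹ • (Y x (ε + h) - Y x ε))‖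
              ≤ Ψt x * Bx := by
            calc ‖(A x (ε + h)) ∘L (h⁻¹ • (Y x (ε + h) - Y x ε))‖
                ≤ ‖A x (ε + h)‖ * ‖h⁻¹ • (Y x (ε + h) - Y x ε)‖ :=
                  ContinuousLinearMap.opNorm_comp_le _ _
              _ ≤ Ψt x * Bx := by
                  rw [hEq]
                  apply mul_le_mul_of_nonneg_right _ (hEq ▸ norm_nonneg _)
                  rw [hΨteq x hx.1]; exact hAb x hxI (ε + h)
          have habs : |h| ≠ 0 := abs_ne_zero.2 hh
          have hn2 : ‖h⁻¹ • ((A x (ε + h) - A x ε) ∘L (Y x ε))‖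
              ≤ (1 + x) * Ψt x * M := by
            have hA2 : ‖A x (ε + h) - A x ε‖ ≤ ((1 + x) * Ψ x) * |h| := by
              have := hMVT x hxI (ε + h) ε
              simpa using this
            calc ‖h⁻¹ • ((A x (ε + h) - A x ε) ∘L (Y x ε))‖
                = ‖h⁻¹‖ * ‖(A x (ε + h) - A x ε) ∘L (Y x ε)‖ := norm_smul h⁻¹ ((A x (ε + h) - A x ε) ∘L (Y x ε))
              _ = |h⁻¹| * ‖(A x (ε + h) - A x ε) ∘L (Y x ε)‖ := by
                  rw [Real.norm_eq_abs]
              _ ≤ |h⁻¹| * (‖A x (ε + h) - A x ε‖ * ‖Y x ε‖) :=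
                  mul_le_mul_of_nonneg_left (ContinuousLinearMap.opNorm_comp_le _ _)
                    (abs_nonneg _)
              _ ≤ |h⁻¹| * ((((1 + x) * Ψ x) * |h|) * M) := by
                  apply mul_le_mul_of_nonneg_left _ (abs_nonneg _)
                  apply mul_le_mul hA2 (hYb x hx.1 ε) (norm_nonneg _)
                  exact mul_nonneg (mul_nonneg (by linarith [hx.1]) (hΨpos x)) (abs_nonneg _)
              _ = (1 + x) * Ψt x * M := by
                  rw [hΨteq x hx.1, abs_inv]
                  field_simp
              _ ≤ (1 + x) * Ψt x * M := le_refl _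
          have hE : 0 < E := Real.exp_pos _
          have hE1 : 1 ≤ E := by
            rw [hEdef]
            apply Real.one_le_exp
            have := hφ0 x hx.1
            nlinarith [hx.1]
          have hBx0 : 0 ≤ Bx := by rw [hBx]; nlinarith
          have hgx : g2 x = (1 + x) * Ψt x := rfl
          calc ‖(A x (ε + h)) ∘L (h⁻¹ • (Y x (ε + h) - Y x ε))
                + h⁻¹ • ((A x (ε + h) - A x ε) ∘L (Y x ε))‖
              ≤ Ψt x * Bx + (1 + x) * Ψt x * M :=
                (norm_add_le _ _).trans (add_le_add hn1 hn2)
            _ < (M + δ) * (E * (g2 x + δ * 1)) := by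
                rw [hgx, hBx]
                nlinarith [hΨtpos x, hx.1, hE, hE1,
                  mul_nonneg (hΨtpos x) hx.1,
                  mul_pos hδ (mul_pos (by linarith : (0:ℝ) < M + δ) hE)])
        (Set.right_mem_Icc.2 ht)
      exact this
    have hc : Continuous fun δ : ℝ => (M + δ) * Real.exp (φ t + δ * t) - M :=
      ((continuous_const.add continuous_id).mul
        (Real.continuous_exp.comp
          (continuous_const.add (continuous_id.mul continuous_const)))).sub continuous_const
    have htend : Filter.Tendsto (fun δ : ℝ => (M + δ) * Real.exp (φ t + δ * t) - M)
        (nhdsWithin 0 (Set.Ioi 0)) (nhds ((M + 0) * Real.exp (φ t + 0 * t) - M)) :=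
      (hc.tendsto 0).mono_left nhdsWithin_le_nhds
    have hle : ‖h⁻¹ • (Y t (ε + h) - Y t ε)‖ ≤ (M + 0) * Real.exp (φ t + 0 * t) - M := by
      refine ge_of_tendsto htend ?_
      filter_upwards [self_mem_nhdsWithin] with δ hδ
      exact key δ hδ
    rw [zero_mul, add_zero, add_zero] at hle
    exact hle
  -- pass to the limit h → 0
  have hZb : ‖Z t ε‖ ≤ M * Real.exp (φ t) - M := by
    have hslope := hasDerivAt_iff_tendsto_slope.1 (hZd t ht ε)
    refine le_of_tendsto hslope.norm ?_
    filter_upwards [self_mem_nhdsWithin] with e he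
    have hne : e - ε ≠ 0 := sub_ne_zero.2 he
    have h5 := hD (e - ε) hne
    rw [slope_def_module]
    simpa using h5
  -- identify the integral in the goal with φ t
  have hint : (∫ s in Set.Icc (0:ℝ) t, (1 + s) * Ψ s) = φ t := by
    rw [integral_Icc_eq_integral_Ioc]
    have h6 : φ t = ∫ s in Set.Ioc (0:ℝ) t, g2 s := by
      show (∫ s in (0:ℝ)..t, g2 s) = _
      exact intervalIntegral.integral_of_le ht
    rw [h6]
    refine setIntegral_congr_fun measurableSet_Ioc fun s hs => ?_
    show (1 + s) * Ψ s = (1 + s) * Ψt s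
    rw [hΨteq s hs.1.le]
  rw [hint]
  have hE : 0 < Real.exp (φ t) := Real.exp_pos _
  nlinarith [hZb]
end

section
/- If v : ℝ → ℂ solves the second-order ODE v'' + c(t)² r² v = 0 with c(t)² = 1 + γ(t), where γ is C¹, γ(t) → γ_± as t → ±∞, and γ' ∈ L¹(ℝ), and r > 0, then there exist constants a_±, b_± ∈ ℂ such that v(t) - a_± e^{i r ∫_0^t c(s)ds} - b_± e^{-i r ∫_0^t c(s)ds} → 0 and v'(t) - i r c(t)(a_± e^{i r ∫_0^t c(s)ds} - b_± e^{-i r ∫_0^t c(s)ds}) → 0 as t → ±∞. -/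
open Filter intervalIntegral Complex MeasureTheory

private lemma aux_derivA (r : ℝ) (hr : 0 < r) (c : ℝ → ℝ) (g : ℝ → ℝ) (hcpos : ∀ t, 0 < c t)
    (Θ : ℝ → ℝ) (hΘ : ∀ t, HasDerivAt Θ (c t) t)
    (hc : ∀ t, HasDerivAt c (g t / (2 * c t)) t)
    (v w : ℝ → ℂ)
    (hv : ∀ t, HasDerivAt v (w t) t)
    (hw2 : ∀ t, HasDerivAt w (-((c t:ℂ))^2 * (r:ℂ)^2 * v t) t) (t : ℝ) :
    HasDerivAt (fun u => (v u - Complex.I * w u / ((r:ℂ) * (c u:ℂ)))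
        * Complex.exp (-(Complex.I * r * (Θ u : ℂ))) / 2)
      (((g t / (4*r*(c t)^3) : ℝ):ℂ) * Complex.I * w t
        * Complex.exp (-(Complex.I * r * (Θ t : ℂ)))) t := by
  have hrC : (r:ℂ) ≠ 0 := by exact_mod_cast hr.ne'
  have hcC : ((c t:ℝ):ℂ) ≠ 0 := by exact_mod_cast (hcpos t).ne'
  have hΘc : HasDerivAt (fun u => ((Θ u : ℝ):ℂ)) ((c t:ℝ):ℂ) t := (hΘ t).ofReal_comp
  have hcc : HasDerivAt (fun u => ((c u : ℝ):ℂ)) ((g t / (2 * c t) : ℝ):ℂ) t := (hc t).ofReal_comp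
  have hem : HasDerivAt (fun u => Complex.exp (-(Complex.I * r * (Θ u : ℂ))))
      (-(Complex.I * r * (c t:ℂ)) * Complex.exp (-(Complex.I * r * (Θ t : ℂ)))) t := by
    have := ((hΘc.const_mul (Complex.I * r)).neg).cexp
    simp only [Pi.neg_apply] at this
    convert this using 1
    ring
  have hden : HasDerivAt (fun u => (r:ℂ) * (c u:ℂ)) ((r:ℂ) * ((g t / (2 * c t) : ℝ):ℂ)) t :=
    hcc.const_mul _
  have hq : HasDerivAt (fun u => Complex.I * w u / ((r:ℂ) * (c u:ℂ)))
      (((Complex.I * (-((c t:ℂ))^2 * (r:ℂ)^2 * v t)) * ((r:ℂ) * (c t:ℂ))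
        - Complex.I * w t * ((r:ℂ) * ((g t / (2 * c t) : ℝ):ℂ))) / ((r:ℂ) * (c t:ℂ))^2) t :=
    ((hw2 t).const_mul Complex.I).div hden (by exact mul_ne_zero hrC hcC)
  have h := (((hv t).sub hq).mul hem).div_const 2
  refine h.congr_deriv ?_
  simp only [Pi.sub_apply]
  push_cast
  field_simp
  ring_nf
  simp only [Complex.I_sq]
  ring_nf

private lemma aux_derivB (r : ℝ) (hr : 0 < r) (c : ℝ → ℝ) (g : ℝ → ℝ) (hcpos : ∀ t, 0 < c t)
    (Θ : ℝ → ℝ) (hΘ : ∀ t, HasDerivAt Θ (c t) t)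
    (hc : ∀ t, HasDerivAt c (g t / (2 * c t)) t)
    (v w : ℝ → ℂ)
    (hv : ∀ t, HasDerivAt v (w t) t)
    (hw2 : ∀ t, HasDerivAt w (-((c t:ℂ))^2 * (r:ℂ)^2 * v t) t) (t : ℝ) :
    HasDerivAt (fun u => (v u + Complex.I * w u / ((r:ℂ) * (c u:ℂ)))
        * Complex.exp (Complex.I * r * (Θ u : ℂ)) / 2)
      (-(((g t / (4*r*(c t)^3) : ℝ):ℂ) * Complex.I) * w t
        * Complex.exp (Complex.I * r * (Θ t : ℂ))) t := by
  have hrC : (r:ℂ) ≠ 0 := by exact_mod_cast hr.ne'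
  have hcC : ((c t:ℝ):ℂ) ≠ 0 := by exact_mod_cast (hcpos t).ne'
  have hΘc : HasDerivAt (fun u => ((Θ u : ℝ):ℂ)) ((c t:ℝ):ℂ) t := (hΘ t).ofReal_comp
  have hcc : HasDerivAt (fun u => ((c u : ℝ):ℂ)) ((g t / (2 * c t) : ℝ):ℂ) t := (hc t).ofReal_comp
  have hep : HasDerivAt (fun u => Complex.exp (Complex.I * r * (Θ u : ℂ)))
      ((Complex.I * r * (c t:ℂ)) * Complex.exp (Complex.I * r * (Θ t : ℂ))) t := by
    have := (hΘc.const_mul (Complex.I * r)).cexp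
    convert this using 1
    ring
  have hden : HasDerivAt (fun u => (r:ℂ) * (c u:ℂ)) ((r:ℂ) * ((g t / (2 * c t) : ℝ):ℂ)) t :=
    hcc.const_mul _
  have hq : HasDerivAt (fun u => Complex.I * w u / ((r:ℂ) * (c u:ℂ)))
      (((Complex.I * (-((c t:ℂ))^2 * (r:ℂ)^2 * v t)) * ((r:ℂ) * (c t:ℂ))
        - Complex.I * w t * ((r:ℂ) * ((g t / (2 * c t) : ℝ):ℂ))) / ((r:ℂ) * (c t:ℂ))^2) t :=
    ((hw2 t).const_mul Complex.I).div hden (by exact mul_ne_zero hrC hcC)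
  have h := (((hv t).add hq).mul hep).div_const 2
  refine h.congr_deriv ?_
  simp only [Pi.add_apply]
  push_cast
  field_simp
  ring_nf
  simp only [Complex.I_sq]
  ring_nf

private lemma aux_tendsto (A fA : ℝ → ℂ) (hA : ∀ t, HasDerivAt A (fA t) t)
    (hcont : Continuous fA) (hint : Integrable fA) :
    (∃ ap, Tendsto A atTop (nhds ap)) ∧ (∃ am, Tendsto A atBot (nhds am)) := by
  have hAint : ∀ t : ℝ, A t - A 0 = ∫ s in (0:ℝ)..t, fA s := fun t =>
    (intervalIntegral.integral_eq_sub_of_hasDerivAt (fun s _ => hA s)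
      (hcont.intervalIntegrable 0 t)).symm
  constructor
  · refine ⟨A 0 + ∫ s in Set.Ioi (0:ℝ), fA s, ?_⟩
    have h := intervalIntegral_tendsto_integral_Ioi 0 hint.integrableOn tendsto_id
    exact ((tendsto_const_nhds (x := A 0)).add h).congr fun t => by
      simp only [id_eq]; rw [← hAint t]; ring
  · refine ⟨A 0 - ∫ s in Set.Iic (0:ℝ), fA s, ?_⟩
    have h := intervalIntegral_tendsto_integral_Iic 0 hint.integrableOn tendsto_id
    refine ((tendsto_const_nhds (x := A 0)).sub h).congr fun t => ?_
    simp only [id_eq]; rw [intervalIntegral.integral_symm, ← hAint t]; ring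

private lemma aux_energy (γ : ℝ → ℝ) (r : ℝ) (hγpos : ∀ t, 0 ≤ γ t) (hγ : ContDiff ℝ 1 γ)
    (hγ' : Integrable (deriv γ)) (v w : ℝ → ℂ)
    (hv : ∀ t, HasDerivAt v (w t) t)
    (hw : ∀ t, HasDerivAt w (-(((1 + γ t) * r ^ 2 : ℝ) : ℂ) * v t) t) :
    ∃ K : ℝ, 0 ≤ K ∧ ∀ t, ‖w t‖ ≤ K := by
  have hγdiff : Differentiable ℝ γ := hγ.differentiable one_ne_zero
  have hγ'cont : Continuous (deriv γ) := hγ.continuous_deriv le_rfl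
  set E : ℝ → ℝ := fun t =>
    (w t).re^2 + (w t).im^2 + (1+γ t)*r^2*((v t).re^2+(v t).im^2) with hE
  set G : ℝ → ℝ := fun t => ∫ s in (0:ℝ)..t, |deriv γ s| with hG
  have hEd : ∀ t, HasDerivAt E (deriv γ t * r^2 * ((v t).re^2 + (v t).im^2)) t := by
    intro t
    have hwre : HasDerivAt (fun s => (w s).re) (-((1 + γ t) * r ^ 2 * (v t).re)) t := by
      have := Complex.reCLM.hasFDerivAt.comp_hasDerivAt t (hw t)
      simpa [Function.comp_def, ← Complex.ofReal_pow] using this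
    have hwim : HasDerivAt (fun s => (w s).im) (-((1 + γ t) * r ^ 2 * (v t).im)) t := by
      have := Complex.imCLM.hasFDerivAt.comp_hasDerivAt t (hw t)
      simpa [Function.comp_def, ← Complex.ofReal_pow] using this
    have hvre : HasDerivAt (fun s => (v s).re) ((w t).re) t :=
      Complex.reCLM.hasFDerivAt.comp_hasDerivAt t (hv t)
    have hvim : HasDerivAt (fun s => (v s).im) ((w t).im) t :=
      Complex.imCLM.hasFDerivAt.comp_hasDerivAt t (hv t)
    have h := ((hwre.pow 2).add (hwim.pow 2)).add
      (((((hγdiff t).hasDerivAt).const_add 1).mul_const (r^2)).mul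
        ((hvre.pow 2).add (hvim.pow 2)))
    simp only [hE]
    refine h.congr_deriv ?_
    simp only [Pi.add_apply, Pi.pow_apply]
    norm_num
    ring
  have hGd : ∀ t, HasDerivAt G (|deriv γ t|) t := by
    intro t
    simp only [hG]
    exact ((hγ'cont.abs).integral_hasStrictDerivAt 0 t).hasDerivAt
  have hEnn : ∀ t, 0 ≤ E t := by
    intro t; simp only [hE]; have := hγpos t; positivity
  have hDle : ∀ t, |deriv γ t * r^2 * ((v t).re^2 + (v t).im^2)| ≤ |deriv γ t| * E t := by
    intro t
    have hD : |deriv γ t * r ^ 2 * ((v t).re^2 + (v t).im^2)|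
        = |deriv γ t| * (r^2 * ((v t).re^2 + (v t).im^2)) := by
      rw [mul_assoc, abs_mul,
        _root_.abs_of_nonneg (show (0:ℝ) ≤ r^2*((v t).re^2+(v t).im^2) by positivity)]
    rw [hD]
    refine mul_le_mul_of_nonneg_left ?_ (abs_nonneg _)
    simp only [hE]
    nlinarith [hγpos t, sq_nonneg (w t).re, sq_nonneg (w t).im, sq_nonneg (v t).re,
      sq_nonneg (v t).im, sq_nonneg r,
      mul_nonneg (mul_nonneg (hγpos t) (sq_nonneg r))
        (add_nonneg (sq_nonneg (v t).re) (sq_nonneg (v t).im))]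
  have hanti : Antitone (fun t => E t * Real.exp (-G t)) := by
    refine antitone_of_hasDerivAt_nonpos
      (f' := fun t => deriv γ t * r^2 * ((v t).re^2 + (v t).im^2) * Real.exp (-G t)
        + E t * (Real.exp (-G t) * -(|deriv γ t|))) (fun t => (hEd t).mul ((hGd t).neg.exp)) ?_
    intro t
    have h1 := le_trans (le_abs_self _) (hDle t)
    have h2 := Real.exp_pos (-G t)
    have h3 := hEnn t
    simp only [Pi.zero_apply]
    nlinarith
  have hmono : Monotone (fun t => E t * Real.exp (G t)) := by
    refine monotone_of_hasDerivAt_nonneg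
      (f' := fun t => deriv γ t * r^2 * ((v t).re^2 + (v t).im^2) * Real.exp (G t)
        + E t * (Real.exp (G t) * |deriv γ t|)) (fun t => (hEd t).mul ((hGd t).exp)) ?_
    intro t
    have h1 := (abs_le.mp (hDle t)).1
    have h2 := Real.exp_pos (G t)
    have h3 := hEnn t
    simp only [Pi.zero_apply]
    nlinarith
  set M : ℝ := ∫ x, |deriv γ x| with hM
  have hM0 : 0 ≤ M := by rw [hM]; exact integral_nonneg fun x => abs_nonneg _
  have hGM : ∀ t, |G t| ≤ M := by
    intro t
    have hint : Integrable (fun s => |deriv γ s|) := hγ'.abs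
    rcases le_total 0 t with h | h
    · have e1 : G t = ∫ s in Set.Ioc 0 t, |deriv γ s| := by
        simp only [hG]; exact intervalIntegral.integral_of_le h
      have h0 : 0 ≤ G t := by
        rw [e1]; exact setIntegral_nonneg measurableSet_Ioc fun x _ => abs_nonneg _
      rw [_root_.abs_of_nonneg h0, e1, hM]
      exact setIntegral_le_integral hint (ae_of_all _ fun x => abs_nonneg _)
    · have e1 : G t = -∫ s in Set.Ioc t 0, |deriv γ s| := by
        simp only [hG]
        rw [intervalIntegral.integral_symm, intervalIntegral.integral_of_le h]
      have h0 : (0:ℝ) ≤ ∫ s in Set.Ioc t 0, |deriv γ s| :=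
        setIntegral_nonneg measurableSet_Ioc fun x _ => abs_nonneg _
      rw [e1, _root_.abs_neg, _root_.abs_of_nonneg h0, hM]
      exact setIntegral_le_integral hint (ae_of_all _ fun x => abs_nonneg _)
  have hG0 : G 0 = 0 := by simp only [hG]; exact intervalIntegral.integral_same
  have hEb : ∀ t, E t ≤ E 0 * Real.exp M := by
    intro t
    rcases le_total 0 t with h | h
    · have h1 : E t * Real.exp (-G t) ≤ E 0 * Real.exp (-G 0) := hanti h
      rw [hG0, neg_zero, Real.exp_zero, mul_one] at h1
      have h2 := mul_le_mul_of_nonneg_right h1 (Real.exp_nonneg (G t))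
      rw [mul_assoc, ← Real.exp_add, neg_add_cancel, Real.exp_zero, mul_one] at h2
      refine h2.trans (mul_le_mul_of_nonneg_left ?_ (hEnn 0))
      exact Real.exp_le_exp.2 ((le_abs_self _).trans (hGM t))
    · have h1 : E t * Real.exp (G t) ≤ E 0 * Real.exp (G 0) := hmono h
      rw [hG0, Real.exp_zero, mul_one] at h1
      have h2 := mul_le_mul_of_nonneg_right h1 (Real.exp_nonneg (-G t))
      rw [mul_assoc, ← Real.exp_add, add_neg_cancel, Real.exp_zero, mul_one] at h2
      refine h2.trans (mul_le_mul_of_nonneg_left ?_ (hEnn 0))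
      exact Real.exp_le_exp.2 ((neg_le_abs _).trans (hGM t))
  refine ⟨Real.sqrt (E 0 * Real.exp M), Real.sqrt_nonneg _, fun t => ?_⟩
  have h3 : ‖w t‖^2 ≤ E 0 * Real.exp M := by
    have hnw : ‖w t‖^2 = (w t).re^2 + (w t).im^2 := by
      simp [Complex.sq_norm, Complex.normSq_apply]; ring
    rw [hnw]
    refine le_trans ?_ (hEb t)
    simp only [hE]
    nlinarith [hγpos t, sq_nonneg (v t).re, sq_nonneg (v t).im, sq_nonneg r,
      mul_nonneg (mul_nonneg (add_nonneg zero_le_one (hγpos t)) (sq_nonneg r))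
        (add_nonneg (sq_nonneg (v t).re) (sq_nonneg (v t).im))]
  calc ‖w t‖ = Real.sqrt (‖w t‖^2) := (Real.sqrt_sq (norm_nonneg _)).symm
    _ ≤ Real.sqrt (E 0 * Real.exp M) := Real.sqrt_le_sqrt h3

/-- Asymptotic integration for the Fourier-transformed Kirchhoff-type equation
(`m = 2` case): if `v'' + c(t)² r² v = 0` with `c(t)² = 1 + γ(t)`, where `γ ≥ 0` is `C¹`,
bounded, `γ(t) → γ_±` as `t → ±∞` and `γ' ∈ L¹(ℝ)`, and `r > 0`, then there are constants
`a_±, b_± ∈ ℂ` such that, with `θ(t) = r ∫_0^t c(s) ds`,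
`v(t) - a_± e^{iθ(t)} - b_± e^{-iθ(t)} → 0` and
`v'(t) - i r c(t)(a_± e^{iθ(t)} - b_± e^{-iθ(t)}) → 0` as `t → ±∞`. -/
theorem asymptotic_integration_m2 (γ : ℝ → ℝ) (γp γm : ℝ) (r : ℝ) (hr : 0 < r)
    (hγpos : ∀ t, 0 ≤ γ t) (hγ : ContDiff ℝ 1 γ)
    (hγp : Tendsto γ atTop (nhds γp)) (hγm : Tendsto γ atBot (nhds γm))
    (hγ' : Integrable (deriv γ))
    (v w : ℝ → ℂ)
    (hv : ∀ t, HasDerivAt v (w t) t)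
    (hw : ∀ t, HasDerivAt w (-(((1 + γ t) * r ^ 2 : ℝ) : ℂ) * v t) t) :
    (∃ a b : ℂ,
      Tendsto (fun t =>
          v t - a * Complex.exp (Complex.I * r * ((∫ s in (0:ℝ)..t, Real.sqrt (1 + γ s) : ℝ) : ℂ))
              - b * Complex.exp (-(Complex.I * r * ((∫ s in (0:ℝ)..t, Real.sqrt (1 + γ s) : ℝ) : ℂ))))
        atTop (nhds 0) ∧
      Tendsto (fun t =>
          w t - Complex.I * r * (Real.sqrt (1 + γ t) : ℂ) *
            (a * Complex.exp (Complex.I * r * ((∫ s in (0:ℝ)..t, Real.sqrt (1 + γ s) : ℝ) : ℂ))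
              - b * Complex.exp (-(Complex.I * r * ((∫ s in (0:ℝ)..t, Real.sqrt (1 + γ s) : ℝ) : ℂ)))))
        atTop (nhds 0)) ∧
    (∃ a b : ℂ,
      Tendsto (fun t =>
          v t - a * Complex.exp (Complex.I * r * ((∫ s in (0:ℝ)..t, Real.sqrt (1 + γ s) : ℝ) : ℂ))
              - b * Complex.exp (-(Complex.I * r * ((∫ s in (0:ℝ)..t, Real.sqrt (1 + γ s) : ℝ) : ℂ))))
        atBot (nhds 0) ∧
      Tendsto (fun t =>
          w t - Complex.I * r * (Real.sqrt (1 + γ t) : ℂ) *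
            (a * Complex.exp (Complex.I * r * ((∫ s in (0:ℝ)..t, Real.sqrt (1 + γ s) : ℝ) : ℂ))
              - b * Complex.exp (-(Complex.I * r * ((∫ s in (0:ℝ)..t, Real.sqrt (1 + γ s) : ℝ) : ℂ)))))
        atBot (nhds 0)) := by
  have hγdiff : Differentiable ℝ γ := hγ.differentiable one_ne_zero
  have hγ'cont : Continuous (deriv γ) := hγ.continuous_deriv le_rfl
  set c : ℝ → ℝ := fun t => Real.sqrt (1 + γ t) with hc_def
  have h1γ : ∀ t, (1:ℝ) ≤ 1 + γ t := fun t => le_add_of_nonneg_right (hγpos t)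
  have hcpos : ∀ t, 0 < c t := fun t => Real.sqrt_pos.2 (lt_of_lt_of_le one_pos (h1γ t))
  have hc1 : ∀ t, (1:ℝ) ≤ c t := fun t => by
    simp only [hc_def]
    rw [Real.one_le_sqrt]
    exact h1γ t
  have hccont : Continuous c := Real.continuous_sqrt.comp (continuous_const.add hγ.continuous)
  have hcd : ∀ t, HasDerivAt c (deriv γ t / (2 * c t)) t := by
    intro t
    have h0 : 1 + γ t ≠ 0 := by have := h1γ t; positivity
    have h := (((hγdiff t).hasDerivAt).const_add 1).sqrt h0
    simpa [hc_def] using h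
  set Θ : ℝ → ℝ := fun t => ∫ s in (0:ℝ)..t, c s with hΘ_def
  have hΘd : ∀ t, HasDerivAt Θ (c t) t := by
    intro t
    simp only [hΘ_def]
    exact (hccont.integral_hasStrictDerivAt 0 t).hasDerivAt
  have hΘcont : Continuous Θ :=
    (show Differentiable ℝ Θ from fun t => (hΘd t).differentiableAt).continuous
  have hwcont : Continuous w :=
    (show Differentiable ℝ w from fun t => (hw t).differentiableAt).continuous
  have hw2 : ∀ t, HasDerivAt w (-((c t:ℂ))^2 * (r:ℂ)^2 * v t) t := by
    intro t
    convert hw t using 1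
    have hsq : ((c t:ℝ):ℂ)^2 = ((1 + γ t : ℝ):ℂ) := by
      rw [← Complex.ofReal_pow]
      norm_cast
      simp only [hc_def]
      exact Real.sq_sqrt (by have := h1γ t; linarith)
    rw [neg_mul, neg_mul, hsq]
    push_cast
    ring
  obtain ⟨K, hK0, hKb⟩ := aux_energy γ r hγpos hγ hγ' v w hv hw
  set EP : ℝ → ℂ := fun t => Complex.exp (Complex.I * r * ((Θ t : ℝ) : ℂ)) with hEP_def
  set EM : ℝ → ℂ := fun t => Complex.exp (-(Complex.I * r * ((Θ t : ℝ) : ℂ))) with hEM_def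
  have hEP1 : ∀ t, ‖EP t‖ = 1 := by
    intro t
    simp only [hEP_def]
    rw [Complex.norm_exp]
    simp [Complex.mul_re]
  have hEM1 : ∀ t, ‖EM t‖ = 1 := by
    intro t
    simp only [hEM_def]
    rw [Complex.norm_exp]
    simp [Complex.mul_re]
  have hEPM : ∀ t, EP t * EM t = 1 := by
    intro t
    simp only [hEP_def, hEM_def]
    rw [← Complex.exp_add]
    simp
  set A : ℝ → ℂ := fun t => (v t - Complex.I * w t / ((r:ℂ) * (c t:ℂ))) * EM t / 2 with hA_def
  set B : ℝ → ℂ := fun t => (v t + Complex.I * w t / ((r:ℂ) * (c t:ℂ))) * EP t / 2 with hB_def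
  set fA : ℝ → ℂ := fun t =>
    ((deriv γ t / (4*r*(c t)^3) : ℝ):ℂ) * Complex.I * w t * EM t with hfA_def
  set fB : ℝ → ℂ := fun t =>
    -(((deriv γ t / (4*r*(c t)^3) : ℝ):ℂ) * Complex.I) * w t * EP t with hfB_def
  have hAd : ∀ t, HasDerivAt A (fA t) t := by
    intro t
    simp only [hA_def, hfA_def, hEM_def]
    exact aux_derivA r hr c (deriv γ) hcpos Θ hΘd hcd v w hv hw2 t
  have hBd : ∀ t, HasDerivAt B (fB t) t := by
    intro t
    simp only [hB_def, hfB_def, hEP_def]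
    exact aux_derivB r hr c (deriv γ) hcpos Θ hΘd hcd v w hv hw2 t
  -- continuity of fA, fB
  have hden_cont : Continuous (fun t => deriv γ t / (4*r*(c t)^3)) := by
    apply hγ'cont.div (by fun_prop)
    intro t
    have := hcpos t
    positivity
  have hfAcont : Continuous fA := by
    simp only [hfA_def, hEM_def]
    fun_prop
  have hfBcont : Continuous fB := by
    simp only [hfB_def, hEP_def]
    fun_prop
  -- integrability
  have hbound : ∀ t, ‖((deriv γ t / (4*r*(c t)^3) : ℝ):ℂ)‖ ≤ |deriv γ t| / (4*r) := by
    intro t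
    rw [Complex.norm_real, Real.norm_eq_abs, abs_div,
      _root_.abs_of_pos (show (0:ℝ) < 4*r*(c t)^3 by have := hcpos t; positivity)]
    have h1 : 4*r*1 ≤ 4*r*(c t)^3 := by
      have := hc1 t
      nlinarith [hr, hcpos t, pow_le_pow_left₀ (by norm_num : (0:ℝ) ≤ 1) this 3]
    calc |deriv γ t| / (4*r*(c t)^3) ≤ |deriv γ t| / (4*r*1) := by
          apply div_le_div_of_nonneg_left (abs_nonneg _) (by positivity)
          exact h1
      _ = |deriv γ t| / (4*r) := by ring_nf
  have hfAb : ∀ t, ‖fA t‖ ≤ (K/(4*r)) * |deriv γ t| := by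
    intro t
    simp only [hfA_def]
    rw [norm_mul, norm_mul, norm_mul, hEM1 t, Complex.norm_I, mul_one, mul_one]
    calc ‖((deriv γ t / (4*r*(c t)^3) : ℝ):ℂ)‖ * ‖w t‖
        ≤ (|deriv γ t| / (4*r)) * K :=
          mul_le_mul (hbound t) (hKb t) (norm_nonneg _) (by positivity)
      _ = (K/(4*r)) * |deriv γ t| := by ring
  have hfBb : ∀ t, ‖fB t‖ ≤ (K/(4*r)) * |deriv γ t| := by
    intro t
    simp only [hfB_def]
    rw [norm_mul, norm_mul, norm_neg, norm_mul, hEP1 t, Complex.norm_I, mul_one, mul_one]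
    calc ‖((deriv γ t / (4*r*(c t)^3) : ℝ):ℂ)‖ * ‖w t‖
        ≤ (|deriv γ t| / (4*r)) * K :=
          mul_le_mul (hbound t) (hKb t) (norm_nonneg _) (by positivity)
      _ = (K/(4*r)) * |deriv γ t| := by ring
  have hgint : Integrable (fun t => (K/(4*r)) * |deriv γ t|) := (hγ'.abs).const_mul _
  have hfAint : Integrable fA :=
    hgint.mono' hfAcont.aestronglyMeasurable (ae_of_all _ hfAb)
  have hfBint : Integrable fB :=
    hgint.mono' hfBcont.aestronglyMeasurable (ae_of_all _ hfBb)
  obtain ⟨⟨ap, hAp⟩, ⟨am, hAm⟩⟩ := aux_tendsto A fA hAd hfAcont hfAint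
  obtain ⟨⟨bp, hBp⟩, ⟨bm, hBm⟩⟩ := aux_tendsto B fB hBd hfBcont hfBint
  -- algebraic identities
  have hrC : (r:ℂ) ≠ 0 := by exact_mod_cast hr.ne'
  have hvid : ∀ t, v t = A t * EP t + B t * EM t := by
    intro t
    simp only [hA_def, hB_def]
    have h : (v t - Complex.I * w t / ((r:ℂ) * (c t:ℂ))) * EM t / 2 * EP t
        + (v t + Complex.I * w t / ((r:ℂ) * (c t:ℂ))) * EP t / 2 * EM t
        = v t * (EP t * EM t) := by ring
    rw [h, hEPM t, mul_one]
  have hwid : ∀ t, w t = Complex.I * r * (c t:ℂ) * (A t * EP t - B t * EM t) := by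
    intro t
    have hcC : ((c t:ℝ):ℂ) ≠ 0 := by exact_mod_cast (hcpos t).ne'
    simp only [hA_def, hB_def]
    have h1 : (v t - Complex.I * w t / ((r:ℂ) * (c t:ℂ))) * EM t / 2 * EP t
        - (v t + Complex.I * w t / ((r:ℂ) * (c t:ℂ))) * EP t / 2 * EM t
        = (EP t * EM t) * (-(Complex.I * w t / ((r:ℂ) * (c t:ℂ)))) := by ring
    rw [h1, hEPM t, one_mul]
    rw [show Complex.I * r * (c t:ℂ) * -(Complex.I * w t / ((r:ℂ) * (c t:ℂ)))
        = -(Complex.I*Complex.I) * w t * (((r:ℂ) * (c t:ℂ))/((r:ℂ) * (c t:ℂ))) from by ring]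
    rw [Complex.I_mul_I, div_self (mul_ne_zero hrC hcC)]
    ring
  have hsum_top : Tendsto (fun t => ‖A t - ap‖ + ‖B t - bp‖) atTop (nhds 0) := by
    have h1 : Tendsto (fun t => ‖A t - ap‖) atTop (nhds 0) := by
      simpa using (hAp.sub_const ap).norm
    have h2 : Tendsto (fun t => ‖B t - bp‖) atTop (nhds 0) := by
      simpa using (hBp.sub_const bp).norm
    simpa using h1.add h2
  have hsum_bot : Tendsto (fun t => ‖A t - am‖ + ‖B t - bm‖) atBot (nhds 0) := by
    have h1 : Tendsto (fun t => ‖A t - am‖) atBot (nhds 0) := by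
      simpa using (hAm.sub_const am).norm
    have h2 : Tendsto (fun t => ‖B t - bm‖) atBot (nhds 0) := by
      simpa using (hBm.sub_const bm).norm
    simpa using h1.add h2
  have main : ∀ (l : Filter ℝ) (gl : ℝ) (a b : ℂ), Tendsto γ l (nhds gl) →
      Tendsto (fun t => ‖A t - a‖ + ‖B t - b‖) l (nhds 0) →
      Tendsto (fun t => v t - a * EP t - b * EM t) l (nhds 0) ∧
      Tendsto (fun t => w t - Complex.I * r * ((c t : ℝ):ℂ) * (a * EP t - b * EM t)) l
        (nhds 0) := by
    intro l gl a b hgl hz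
    constructor
    · apply squeeze_zero_norm _ hz
      intro t
      have e : v t - a * EP t - b * EM t = (A t - a) * EP t + (B t - b) * EM t := by
        rw [hvid t]; ring
      rw [e]
      calc ‖(A t - a) * EP t + (B t - b) * EM t‖
          ≤ ‖(A t - a) * EP t‖ + ‖(B t - b) * EM t‖ := norm_add_le _ _
        _ = ‖A t - a‖ + ‖B t - b‖ := by
            rw [norm_mul, norm_mul, hEP1 t, hEM1 t, mul_one, mul_one]
    · have hct : Tendsto c l (nhds (Real.sqrt (1 + gl))) := by
        have h1 : Tendsto (fun t => 1 + γ t) l (nhds (1 + gl)) := tendsto_const_nhds.add hgl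
        have h2 := ((Real.continuous_sqrt.continuousAt (x := 1 + gl)).tendsto).comp h1
        simpa [hc_def, Function.comp_def] using h2
      apply squeeze_zero_norm (a := fun t => r * c t * (‖A t - a‖ + ‖B t - b‖))
      · intro t
        have e : w t - Complex.I * r * ((c t : ℝ):ℂ) * (a * EP t - b * EM t)
            = Complex.I * r * ((c t : ℝ):ℂ) * ((A t - a) * EP t - (B t - b) * EM t) := by
          rw [hwid t]; ring
        rw [e, norm_mul]
        have e2 : ‖Complex.I * (r:ℂ) * ((c t : ℝ):ℂ)‖ = r * c t := by
          rw [norm_mul, norm_mul, Complex.norm_I, one_mul, Complex.norm_real,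
            Complex.norm_real, Real.norm_eq_abs, Real.norm_eq_abs,
            _root_.abs_of_pos hr, _root_.abs_of_pos (hcpos t)]
        rw [e2]
        refine mul_le_mul_of_nonneg_left ?_ (by have := hcpos t; positivity)
        calc ‖(A t - a) * EP t - (B t - b) * EM t‖
            ≤ ‖(A t - a) * EP t‖ + ‖(B t - b) * EM t‖ := norm_sub_le _ _
          _ = ‖A t - a‖ + ‖B t - b‖ := by
              rw [norm_mul, norm_mul, hEP1 t, hEM1 t, mul_one, mul_one]
      · have h3 := ((tendsto_const_nhds (x := r) (f := l)).mul hct).mul hz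
        simpa using h3
  obtain ⟨htop1, htop2⟩ := main atTop γp ap bp hγp hsum_top
  obtain ⟨hbot1, hbot2⟩ := main atBot γm am bm hγm hsum_bot
  refine ⟨⟨ap, bp, ?_, ?_⟩, ⟨am, bm, ?_, ?_⟩⟩
  · simpa only [hEP_def, hEM_def, hΘ_def, hc_def] using htop1
  · simpa only [hEP_def, hEM_def, hΘ_def, hc_def] using htop2
  · simpa only [hEP_def, hEM_def, hΘ_def, hc_def] using hbot1
  · simpa only [hEP_def, hEM_def, hΘ_def, hc_def] using hbot2
end
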